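/- Comparison of the caloric extension with local averages: for every bounded measurable u₀ : ℝⁿ → ℝ^l with caloric extension ũ₀, every x ∈ ℝⁿ, every t > 0 and every K > 0, letting c^K_{x,t} denote the average of u₀ over the ball B_{K√t}(x), one has |ũ₀(x,t) - c^K_{x,t}| ≤ K^n [u₀]_{BMO_{K√t}} + 2 ‖u₀‖_{L^∞(ℝⁿ)} (4π)^{-n/2} ∫_{ℝⁿ \ B_K(0)} e^{-|y|²/4} dy. -/

import Mathlib

open MeasureTheory Metric Set
open scoped ENNReal

noncomputable section

abbrev Rn (n : ℕ) : Type := EuclideanSpace ℝ (Fin n)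

/-- The heat kernel `G(x,t) = (4πt)^{-n/2} e^{-|x|²/(4t)}` on `ℝⁿ`. -/
def heatKernel (n : ℕ) (x : Rn n) (t : ℝ) : ℝ :=
  (4 * Real.pi * t) ^ (-(n : ℝ) / 2) * Real.exp (-‖x‖ ^ 2 / (4 * t))

/-- Caloric extension `ũ₀(x,t) = ∫ G(x-y,t) u₀(y) dy` (componentwise). -/
def caloricExt {n : ℕ} {F : Type*} [NormedAddCommGroup F] [NormedSpace ℝ F]
    (u₀ : Rn n → F) (x : Rn n) (t : ℝ) : F :=
  ∫ y, heatKernel n (x - y) t • u₀ y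

/-- Average of `f` over the ball `B_r(x)`. -/
def ballAvg {n : ℕ} {F : Type*} [NormedAddCommGroup F] [NormedSpace ℝ F]
    (f : Rn n → F) (x : Rn n) (r : ℝ) : F :=
  ⨍ y in ball x r, f y

/-- The set of numbers `r^{-n} ∫_{B_r(x)} |f - f_{x,r}|`, for `x ∈ ℝⁿ` and `0 < r ≤ R`. -/
def bmoSet {n : ℕ} {F : Type*} [NormedAddCommGroup F] [NormedSpace ℝ F]
    (f : Rn n → F) (R : ℝ≥0∞) : Set ℝ :=
  {a | ∃ x r, 0 < r ∧ ENNReal.ofReal r ≤ R ∧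
    a = (r ^ n)⁻¹ * ∫ y in ball x r, ‖f y - ballAvg f x r‖}

/-- The BMO_R seminorm `[f]_{BMO_R}`. -/
def bmoSeminorm {n : ℕ} {F : Type*} [NormedAddCommGroup F] [NormedSpace ℝ F]
    (f : Rn n → F) (R : ℝ≥0∞) : ℝ :=
  sSup (bmoSet f R)

/-- Spatial partial derivative in direction `e_i` of a time-dependent map. -/
def spd {n : ℕ} {F : Type*} [NormedAddCommGroup F] [NormedSpace ℝ F]
    (u : Rn n → ℝ → F) (x : Rn n) (t : ℝ) (i : Fin n) : F :=
  fderiv ℝ (fun z => u z t) x (EuclideanSpace.single i 1)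

/-- Carleson set of the gradient: numbers `r^{-n} ∫_{P_r(x,r²)} |∇u|²` for `0 < r ≤ R`. -/
def gradCarlesonSet {n : ℕ} {F : Type*} [NormedAddCommGroup F] [NormedSpace ℝ F]
    (u : Rn n → ℝ → F) (R : ℝ≥0∞) : Set ℝ :=
  {a | ∃ x r, 0 < r ∧ ENNReal.ofReal r ≤ R ∧
    a = (r ^ n)⁻¹ * ∫ t in Ioc (0:ℝ) (r ^ 2), ∫ y in ball x r,
      ‖fderiv ℝ (fun z => u z t) y‖ ^ 2}

/-- Duhamel operator `𝕊f(x,t) = ∫_0^t ∫ G(x-y,t-s) f(y,s) dy ds`. -/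
def duhamel {n : ℕ} {F : Type*} [NormedAddCommGroup F] [NormedSpace ℝ F]
    (f : Rn n → ℝ → F) (x : Rn n) (t : ℝ) : F :=
  ∫ s in Ioc (0:ℝ) t, ∫ y, heatKernel n (x - y) (t - s) • f y s

/-! Constituent sets for the norms of the spaces `X_T`, `Y_T`, `Z_T` (with `T ∈ (0,∞]`). -/

def xSet1 {n : ℕ} {F : Type*} [NormedAddCommGroup F] [NormedSpace ℝ F]
    (f : Rn n → ℝ → F) (T : ℝ≥0∞) : Set ℝ :=
  {a | ∃ x t, 0 < t ∧ ENNReal.ofReal t ≤ T ∧ a = ‖f x t‖}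

def xSet2 {n : ℕ} {F : Type*} [NormedAddCommGroup F] [NormedSpace ℝ F]
    (f : Rn n → ℝ → F) (T : ℝ≥0∞) : Set ℝ :=
  {a | ∃ x t, 0 < t ∧ ENNReal.ofReal t ≤ T ∧
    a = Real.sqrt t * ‖fderiv ℝ (fun z => f z t) x‖}

def xSet3 {n : ℕ} {F : Type*} [NormedAddCommGroup F] [NormedSpace ℝ F]
    (f : Rn n → ℝ → F) (T : ℝ≥0∞) : Set ℝ :=
  {a | ∃ x r, 0 < r ∧ ENNReal.ofReal (r ^ 2) ≤ T ∧
    a = (r ^ n)⁻¹ * ∫ t in Ioc (0:ℝ) (r ^ 2), ∫ y in ball x r,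
      ‖fderiv ℝ (fun z => f z t) y‖ ^ 2}

/-- Membership in `X_T`. -/
def MemX {n : ℕ} {F : Type*} [NormedAddCommGroup F] [NormedSpace ℝ F]
    (f : Rn n → ℝ → F) (T : ℝ≥0∞) : Prop :=
  BddAbove (xSet1 f T) ∧ BddAbove (xSet2 f T) ∧ BddAbove (xSet3 f T)

/-- `‖f‖_{X_T}`. -/
def xNorm {n : ℕ} {F : Type*} [NormedAddCommGroup F] [NormedSpace ℝ F]
    (f : Rn n → ℝ → F) (T : ℝ≥0∞) : ℝ :=
  sSup (xSet2 f T) + Real.sqrt (sSup (xSet3 f T))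

/-- `|||f|||_{X_T}`. -/
def xNormFull {n : ℕ} {F : Type*} [NormedAddCommGroup F] [NormedSpace ℝ F]
    (f : Rn n → ℝ → F) (T : ℝ≥0∞) : ℝ :=
  sSup (xSet1 f T) + xNorm f T

def ySet1 {n : ℕ} {F : Type*} [NormedAddCommGroup F] [NormedSpace ℝ F]
    (f : Rn n → ℝ → F) (T : ℝ≥0∞) : Set ℝ :=
  {a | ∃ x t, 0 < t ∧ ENNReal.ofReal t ≤ T ∧ a = t * ‖f x t‖}

def ySet2 {n : ℕ} {F : Type*} [NormedAddCommGroup F] [NormedSpace ℝ F]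
    (f : Rn n → ℝ → F) (T : ℝ≥0∞) : Set ℝ :=
  {a | ∃ x r, 0 < r ∧ ENNReal.ofReal (r ^ 2) ≤ T ∧
    a = (r ^ n)⁻¹ * ∫ t in Ioc (0:ℝ) (r ^ 2), ∫ y in ball x r, ‖f y t‖}

/-- Membership in `Y_T`. -/
def MemY {n : ℕ} {F : Type*} [NormedAddCommGroup F] [NormedSpace ℝ F]
    (f : Rn n → ℝ → F) (T : ℝ≥0∞) : Prop :=
  BddAbove (ySet1 f T) ∧ BddAbove (ySet2 f T)

/-- `‖f‖_{Y_T}`. -/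
def yNorm {n : ℕ} {F : Type*} [NormedAddCommGroup F] [NormedSpace ℝ F]
    (f : Rn n → ℝ → F) (T : ℝ≥0∞) : ℝ :=
  sSup (ySet1 f T) + sSup (ySet2 f T)

def zSet1 {n : ℕ} {F : Type*} [NormedAddCommGroup F] [NormedSpace ℝ F]
    (f : Rn n → ℝ → F) (T : ℝ≥0∞) : Set ℝ :=
  {a | ∃ x t, 0 < t ∧ ENNReal.ofReal t ≤ T ∧ a = Real.sqrt t * ‖f x t‖}

def zSet2 {n : ℕ} {F : Type*} [NormedAddCommGroup F] [NormedSpace ℝ F]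
    (f : Rn n → ℝ → F) (T : ℝ≥0∞) : Set ℝ :=
  {a | ∃ x r, 0 < r ∧ ENNReal.ofReal (r ^ 2) ≤ T ∧
    a = (r ^ n)⁻¹ * ∫ t in Ioc (0:ℝ) (r ^ 2), ∫ y in ball x r, ‖f y t‖ ^ 2}

/-- Membership in `Z_T`. -/
def MemZ {n : ℕ} {F : Type*} [NormedAddCommGroup F] [NormedSpace ℝ F]
    (f : Rn n → ℝ → F) (T : ℝ≥0∞) : Prop :=
  BddAbove (zSet1 f T) ∧ BddAbove (zSet2 f T)

/-- `‖f‖_{Z_T}`. -/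
def zNorm {n : ℕ} {F : Type*} [NormedAddCommGroup F] [NormedSpace ℝ F]
    (f : Rn n → ℝ → F) (T : ℝ≥0∞) : ℝ :=
  sSup (zSet1 f T) + Real.sqrt (sSup (zSet2 f T))

end


namespace Statement3Aux

open Real

lemma integrable_gauss (n : ℕ) {b : ℝ} (hb : 0 < b) :
    Integrable (fun v : Rn n => Real.exp (-b * ‖v‖ ^ 2)) := by
  have h := (GaussianFourier.integrable_cexp_neg_mul_sq_norm_add (V := Rn n)
    (show (0:ℝ) < (b:ℂ).re by simpa using hb) 0 0).norm
  refine h.congr (Filter.Eventually.of_forall fun v => ?_)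
  simp [Complex.norm_exp]
  exact Or.inl (by norm_cast)

lemma integral_gauss (n : ℕ) {b : ℝ} (hb : 0 < b) :
    ∫ v : Rn n, Real.exp (-b * ‖v‖ ^ 2) = (π / b) ^ ((n:ℝ) / 2) := by
  rw [GaussianFourier.integral_rexp_neg_mul_sq_norm hb]
  simp [finrank_euclideanSpace]

lemma heatKernel_eq (n : ℕ) (z : Rn n) (t : ℝ) :
    heatKernel n z t = (4*π*t) ^ (-(n:ℝ)/2) * Real.exp (-(1/(4*t)) * ‖z‖ ^ 2) := by
  unfold heatKernel; ring_nf

lemma heatKernel_nonneg (n : ℕ) (z : Rn n) {t : ℝ} (ht : 0 < t) :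
    0 ≤ heatKernel n z t := by
  unfold heatKernel
  have h1 : (0:ℝ) ≤ (4*π*t) ^ (-(n:ℝ)/2) := Real.rpow_nonneg (by positivity) _
  positivity

lemma heatKernel_le (n : ℕ) (z : Rn n) {t : ℝ} (ht : 0 < t) :
    heatKernel n z t ≤ (4*π*t) ^ (-(n:ℝ)/2) := by
  unfold heatKernel
  have h1 : (0:ℝ) ≤ (4*π*t) ^ (-(n:ℝ)/2) := Real.rpow_nonneg (by positivity) _
  have h2 : Real.exp (-‖z‖ ^ 2 / (4*t)) ≤ 1 := by
    rw [Real.exp_le_one_iff]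
    have h3 : (0:ℝ) ≤ ‖z‖ ^ 2 / (4*t) := by positivity
    rw [neg_div]; linarith
  nlinarith

lemma integrable_heatKernel (n : ℕ) {t : ℝ} (ht : 0 < t) :
    Integrable (fun z : Rn n => heatKernel n z t) := by
  simp_rw [heatKernel_eq]
  exact (integrable_gauss n (show (0:ℝ) < 1/(4*t) by positivity)).const_mul _

lemma integral_heatKernel (n : ℕ) {t : ℝ} (ht : 0 < t) :
    ∫ z : Rn n, heatKernel n z t = 1 := by
  simp_rw [heatKernel_eq]
  rw [integral_const_mul, integral_gauss n (show (0:ℝ) < 1/(4*t) by positivity)]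
  have h : π / (1/(4*t)) = 4*π*t := by field_simp
  rw [h, ← Real.rpow_add (by positivity)]
  simp [neg_div]

lemma integrable_heatKernel_sub (n : ℕ) (x : Rn n) {t : ℝ} (ht : 0 < t) :
    Integrable (fun y : Rn n => heatKernel n (x - y) t) :=
  (integrable_comp_sub_left (fun z : Rn n => heatKernel n z t) x).2 (integrable_heatKernel n ht)

lemma integral_heatKernel_sub (n : ℕ) (x : Rn n) {t : ℝ} (ht : 0 < t) :
    ∫ y : Rn n, heatKernel n (x - y) t = 1 := by
  rw [MeasureTheory.integral_sub_left_eq_self (fun z : Rn n => heatKernel n z t) volume x]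
  exact integral_heatKernel n ht

lemma continuous_heatKernel (n : ℕ) (t : ℝ) :
    Continuous (fun z : Rn n => heatKernel n z t) := by
  unfold heatKernel; fun_prop

end Statement3Aux

set_option maxHeartbeats 1000000 in
/-- comparison of the caloric extension with local averages. -/
theorem statement3 (n l : ℕ) (hn : 1 ≤ n)
    (u₀ : Rn n → Rn l) (hmeas : Measurable u₀)
    (hbdd : BddAbove (Set.range fun y => ‖u₀ y‖)) :
    ∀ x : Rn n, ∀ t : ℝ, 0 < t → ∀ K : ℝ, 0 < K →
      ‖caloricExt u₀ x t - ballAvg u₀ x (K * Real.sqrt t)‖ ≤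
        K ^ n * bmoSeminorm u₀ (ENNReal.ofReal (K * Real.sqrt t)) +
          2 * (⨆ y : Rn n, ‖u₀ y‖) * ((4 * Real.pi) ^ ((n : ℝ) / 2))⁻¹ *
            ∫ y in (ball (0 : Rn n) K)ᶜ, Real.exp (-‖y‖ ^ 2 / 4) := by
  intro x t ht K hK
  classical
  have hπ : (0:ℝ) < Real.pi := Real.pi_pos
  set M : ℝ := ⨆ y : Rn n, ‖u₀ y‖ with hM
  have hMle : ∀ y, ‖u₀ y‖ ≤ M := fun y => le_ciSup hbdd y
  have hM0 : (0:ℝ) ≤ M := le_trans (norm_nonneg _) (hMle 0)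
  set s : ℝ := Real.sqrt t with hs
  have hs0 : 0 < s := Real.sqrt_pos.2 ht
  set r : ℝ := K * s with hr
  have hr0 : 0 < r := mul_pos hK hs0
  set B : Set (Rn n) := ball x r with hB
  set c : Rn l := ballAvg u₀ x r with hc
  have hnempty : Nonempty (Fin n) := ⟨⟨0, hn⟩⟩
  have hnontriv : Nontrivial (Rn n) := by
    refine ⟨0, EuclideanSpace.single ⟨0, hn⟩ 1, ?_⟩
    intro h
    have := congrArg (fun v : Rn n => v ⟨0, hn⟩) h
    simp at this
  have hBmeas : MeasurableSet B := measurableSet_ball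
  -- basic heat kernel facts
  have hGint := Statement3Aux.integrable_heatKernel_sub n x ht
  have hGpos : ∀ y : Rn n, 0 ≤ heatKernel n (x - y) t :=
    fun y => Statement3Aux.heatKernel_nonneg n _ ht
  have hcont : Continuous fun y : Rn n => heatKernel n (x - y) t :=
    (Statement3Aux.continuous_heatKernel n t).comp (continuous_const.sub continuous_id)
  have hsm : AEStronglyMeasurable (fun y => heatKernel n (x - y) t • u₀ y) volume :=
    hcont.aestronglyMeasurable.smul hmeas.aestronglyMeasurable
  have hInt : Integrable (fun y => heatKernel n (x - y) t • u₀ y) := by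
    refine (hGint.mul_const M).mono' hsm (Filter.Eventually.of_forall fun y => ?_)
    rw [norm_smul, Real.norm_eq_abs, abs_of_nonneg (hGpos y)]
    exact mul_le_mul_of_nonneg_left (hMle y) (hGpos y)
  -- averaged value bounds
  have havg : ∀ (z : Rn n) (ρ : ℝ), 0 < ρ → ‖ballAvg u₀ z ρ‖ ≤ M := by
    intro z ρ hρ
    have hlt : volume (ball z ρ) < ⊤ := measure_ball_lt_top
    have hpos : 0 < (volume (ball z ρ)).toReal :=
      ENNReal.toReal_pos (measure_ball_pos volume z hρ).ne' hlt.ne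
    have hle : ‖∫ y in ball z ρ, u₀ y‖ ≤ M * (volume (ball z ρ)).toReal :=
      norm_setIntegral_le_of_norm_le_const_ae hlt
        (Filter.Eventually.of_forall fun y => hMle y)
    rw [ballAvg, setAverage_eq, norm_smul, Real.norm_eq_abs,
      abs_of_nonneg (inv_nonneg.2 measureReal_nonneg)]
    calc (volume (ball z ρ)).toReal⁻¹ * ‖∫ y in ball z ρ, u₀ y‖
        ≤ (volume (ball z ρ)).toReal⁻¹ * (M * (volume (ball z ρ)).toReal) :=
          mul_le_mul_of_nonneg_left hle (inv_nonneg.2 ENNReal.toReal_nonneg)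
      _ = M := by
          rw [mul_comm M _, ← mul_assoc, inv_mul_cancel₀ hpos.ne', one_mul]
  have hdiff : ∀ (z : Rn n) (ρ : ℝ), 0 < ρ → ∀ y, ‖u₀ y - ballAvg u₀ z ρ‖ ≤ 2 * M := by
    intro z ρ hρ y
    calc ‖u₀ y - ballAvg u₀ z ρ‖ ≤ ‖u₀ y‖ + ‖ballAvg u₀ z ρ‖ := norm_sub_le _ _
      _ ≤ M + M := add_le_add (hMle y) (havg z ρ hρ)
      _ = 2 * M := by ring
  -- key identity
  have hkey : caloricExt u₀ x t - c = ∫ y, heatKernel n (x - y) t • (u₀ y - c) := by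
    have h1 : Integrable (fun y => heatKernel n (x - y) t • c) := hGint.smul_const c
    have h2 : (fun y => heatKernel n (x - y) t • (u₀ y - c))
        = fun y => heatKernel n (x - y) t • u₀ y - heatKernel n (x - y) t • c :=
      funext fun y => smul_sub _ _ _
    rw [h2, integral_sub hInt h1, integral_smul_const,
      Statement3Aux.integral_heatKernel_sub n x ht, one_smul, caloricExt]
  have hIntd : Integrable (fun y => heatKernel n (x - y) t • (u₀ y - c)) := by
    refine (hInt.sub (hGint.smul_const c)).congr (Filter.Eventually.of_forall fun y => ?_)
    simp [smul_sub]
  -- split into ball and complement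
  have hsplit : (∫ y, heatKernel n (x - y) t • (u₀ y - c))
      = (∫ y in B, heatKernel n (x - y) t • (u₀ y - c))
        + ∫ y in Bᶜ, heatKernel n (x - y) t • (u₀ y - c) :=
    (integral_add_compl hBmeas hIntd).symm
  -- interior estimate
  have hsub_sm : AEStronglyMeasurable (fun y => ‖u₀ y - c‖) volume :=
    (hmeas.aestronglyMeasurable.sub aestronglyMeasurable_const).norm
  have hIOn2 : IntegrableOn (fun y => (4*Real.pi*t) ^ (-(n:ℝ)/2) * ‖u₀ y - c‖) B := by
    refine Measure.integrableOn_of_bounded (M := (4*Real.pi*t) ^ (-(n:ℝ)/2) * (2*M))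
      measure_ball_lt_top.ne (aestronglyMeasurable_const.mul hsub_sm)
      (Filter.Eventually.of_forall fun y => ?_)
    have h1 : (0:ℝ) ≤ (4*Real.pi*t) ^ (-(n:ℝ)/2) := Real.rpow_nonneg (by positivity) _
    rw [Real.norm_eq_abs, abs_of_nonneg (by positivity)]
    exact mul_le_mul_of_nonneg_left (hdiff x r hr0 y) h1
  have hIOn1 : IntegrableOn (fun y => heatKernel n (x - y) t * ‖u₀ y - c‖) B := by
    refine hIOn2.mono' ((hcont.aestronglyMeasurable.mul hsub_sm).restrict)
      (Filter.Eventually.of_forall fun y => ?_)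
    rw [Real.norm_eq_abs, abs_of_nonneg (mul_nonneg (hGpos y) (norm_nonneg _))]
    exact mul_le_mul_of_nonneg_right (Statement3Aux.heatKernel_le n _ ht) (norm_nonneg _)
  have hintr : ‖∫ y in B, heatKernel n (x - y) t • (u₀ y - c)‖
      ≤ (4*Real.pi*t) ^ (-(n:ℝ)/2) * ∫ y in B, ‖u₀ y - c‖ := by
    calc ‖∫ y in B, heatKernel n (x - y) t • (u₀ y - c)‖
        ≤ ∫ y in B, ‖heatKernel n (x - y) t • (u₀ y - c)‖ := norm_integral_le_integral_norm _
      _ = ∫ y in B, heatKernel n (x - y) t * ‖u₀ y - c‖ := by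
          congr 1 with y
          rw [norm_smul, Real.norm_eq_abs, abs_of_nonneg (hGpos y)]
      _ ≤ ∫ y in B, (4*Real.pi*t) ^ (-(n:ℝ)/2) * ‖u₀ y - c‖ := by
          refine setIntegral_mono_on hIOn1 hIOn2 hBmeas fun y _ => ?_
          exact mul_le_mul_of_nonneg_right (Statement3Aux.heatKernel_le n _ ht) (norm_nonneg _)
      _ = (4*Real.pi*t) ^ (-(n:ℝ)/2) * ∫ y in B, ‖u₀ y - c‖ := integral_const_mul _ _
  -- BMO bound
  have hvol : ∀ (z : Rn n) (ρ : ℝ), 0 < ρ →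
      (volume (ball z ρ)).toReal = ρ ^ n * (volume (ball (0:Rn n) 1)).toReal := by
    intro z ρ hρ
    rw [Measure.addHaar_ball volume z hρ.le, ENNReal.toReal_mul,
      finrank_euclideanSpace_fin, ENNReal.toReal_ofReal (by positivity)]
  have hbdd_bmo : BddAbove (bmoSet u₀ (ENNReal.ofReal r)) := by
    refine ⟨2 * M * (volume (ball (0:Rn n) 1)).toReal, fun a ha => ?_⟩
    obtain ⟨z, ρ, hρ, -, rfl⟩ := ha
    have h1 : ∫ y in ball z ρ, ‖u₀ y - ballAvg u₀ z ρ‖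
        ≤ (2*M) * (volume (ball z ρ)).toReal := by
      refine le_trans (le_abs_self _) ?_
      have := norm_setIntegral_le_of_norm_le_const_ae (μ := volume) (s := ball z ρ)
        (f := fun y => ‖u₀ y - ballAvg u₀ z ρ‖) (C := 2*M) measure_ball_lt_top
        (Filter.Eventually.of_forall fun y => by
          rw [norm_norm]; exact hdiff z ρ hρ y)
      simpa [Real.norm_eq_abs, Measure.real] using this
    have hρn : (0:ℝ) < ρ ^ n := by positivity
    calc (ρ ^ n)⁻¹ * ∫ y in ball z ρ, ‖u₀ y - ballAvg u₀ z ρ‖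
        ≤ (ρ ^ n)⁻¹ * ((2*M) * (ρ ^ n * (volume (ball (0:Rn n) 1)).toReal)) := by
          rw [← hvol z ρ hρ]
          exact mul_le_mul_of_nonneg_left h1 (by positivity)
      _ = 2 * M * (volume (ball (0:Rn n) 1)).toReal := by
          field_simp
  have hbmo_mem : (r ^ n)⁻¹ * (∫ y in ball x r, ‖u₀ y - ballAvg u₀ x r‖)
      ∈ bmoSet u₀ (ENNReal.ofReal r) := ⟨x, r, hr0, le_refl _, rfl⟩
  have hle_bmo : (r ^ n)⁻¹ * (∫ y in B, ‖u₀ y - c‖) ≤ bmoSeminorm u₀ (ENNReal.ofReal r) :=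
    le_csSup hbdd_bmo hbmo_mem
  have hbmo_nonneg : 0 ≤ bmoSeminorm u₀ (ENNReal.ofReal r) := by
    refine le_trans ?_ hle_bmo
    have : 0 ≤ ∫ y in B, ‖u₀ y - c‖ := integral_nonneg fun y => norm_nonneg _
    positivity
  have hrn : (0:ℝ) < r ^ n := by positivity
  have hintB : (∫ y in B, ‖u₀ y - c‖) ≤ r ^ n * bmoSeminorm u₀ (ENNReal.ofReal r) := by
    have := mul_le_mul_of_nonneg_left hle_bmo hrn.le
    rwa [← mul_assoc, mul_inv_cancel₀ hrn.ne', one_mul] at this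
  -- exterior estimate
  have hIOnc2 : IntegrableOn (fun y => heatKernel n (x - y) t * (2*M)) Bᶜ :=
    (hGint.mul_const (2*M)).integrableOn
  have hIOnc1 : IntegrableOn (fun y => heatKernel n (x - y) t * ‖u₀ y - c‖) Bᶜ := by
    refine hIOnc2.mono' ((hcont.aestronglyMeasurable.mul hsub_sm).restrict)
      (Filter.Eventually.of_forall fun y => ?_)
    rw [Real.norm_eq_abs, abs_of_nonneg (mul_nonneg (hGpos y) (norm_nonneg _))]
    exact mul_le_mul_of_nonneg_left (hdiff x r hr0 y) (hGpos y)
  have hext : ‖∫ y in Bᶜ, heatKernel n (x - y) t • (u₀ y - c)‖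
      ≤ (2*M) * ∫ y in Bᶜ, heatKernel n (x - y) t := by
    calc ‖∫ y in Bᶜ, heatKernel n (x - y) t • (u₀ y - c)‖
        ≤ ∫ y in Bᶜ, ‖heatKernel n (x - y) t • (u₀ y - c)‖ := norm_integral_le_integral_norm _
      _ = ∫ y in Bᶜ, heatKernel n (x - y) t * ‖u₀ y - c‖ := by
          congr 1 with y
          rw [norm_smul, Real.norm_eq_abs, abs_of_nonneg (hGpos y)]
      _ ≤ ∫ y in Bᶜ, heatKernel n (x - y) t * (2*M) := by
          refine setIntegral_mono_on hIOnc1 hIOnc2 hBmeas.compl fun y _ => ?_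
          exact mul_le_mul_of_nonneg_left (hdiff x r hr0 y) (hGpos y)
      _ = (∫ y in Bᶜ, heatKernel n (x - y) t) * (2*M) := integral_mul_const _ _
      _ = (2*M) * ∫ y in Bᶜ, heatKernel n (x - y) t := mul_comm _ _
  -- tail computation
  have hts : s ^ 2 = t := Real.sq_sqrt ht.le
  have htail : (∫ y in Bᶜ, heatKernel n (x - y) t)
      = (4*Real.pi) ^ (-(n:ℝ)/2) * ∫ w in (ball (0:Rn n) K)ᶜ, Real.exp (-‖w‖ ^ 2 / 4) := by
    rw [← integral_indicator hBmeas.compl]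
    have e1 : ∀ y : Rn n, (Bᶜ).indicator (fun y => heatKernel n (x - y) t) y
        = (((ball (0:Rn n) r)ᶜ).indicator (fun z => heatKernel n z t)) (x - y) := by
      intro y
      have hmem : x - y ∈ (ball (0:Rn n) r)ᶜ ↔ y ∈ Bᶜ := by
        simp only [mem_compl_iff, hB, mem_ball, dist_eq_norm, sub_zero, not_iff_not]
        rw [norm_sub_rev]
      by_cases hy : y ∈ Bᶜ
      · rw [indicator_of_mem hy, indicator_of_mem (hmem.2 hy)]
      · rw [indicator_of_notMem hy, indicator_of_notMem (fun h => hy (hmem.1 h))]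
    simp_rw [e1]
    rw [MeasureTheory.integral_sub_left_eq_self
      (((ball (0:Rn n) r)ᶜ).indicator (fun z => heatKernel n z t)) volume x]
    have e2 := Measure.integral_comp_smul_of_nonneg (volume : Measure (Rn n))
      (((ball (0:Rn n) r)ᶜ).indicator (fun z => heatKernel n z t)) s (hR := hs0.le)
    rw [finrank_euclideanSpace_fin] at e2
    have e3 : ∀ w : Rn n, (((ball (0:Rn n) r)ᶜ).indicator (fun z => heatKernel n z t)) (s • w)
        = ((ball (0:Rn n) K)ᶜ).indicator
            (fun w => (4*Real.pi*t) ^ (-(n:ℝ)/2) * Real.exp (-‖w‖ ^ 2 / 4)) w := by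
      intro w
      have hmem : s • w ∈ (ball (0:Rn n) r)ᶜ ↔ w ∈ (ball (0:Rn n) K)ᶜ := by
        simp only [mem_compl_iff, mem_ball, dist_eq_norm, sub_zero, not_iff_not]
        rw [norm_smul, Real.norm_eq_abs, abs_of_nonneg hs0.le, hr, mul_comm K s]
        exact mul_lt_mul_iff_right₀ hs0
      have hval : heatKernel n (s • w) t = (4*Real.pi*t) ^ (-(n:ℝ)/2) * Real.exp (-‖w‖ ^ 2 / 4) := by
        rw [heatKernel]
        congr 1
        rw [norm_smul, Real.norm_eq_abs, abs_of_nonneg hs0.le, mul_pow, hts]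
        congr 1
        field_simp
      by_cases hw : w ∈ (ball (0:Rn n) K)ᶜ
      · rw [indicator_of_mem (hmem.2 hw), indicator_of_mem hw, hval]
      · rw [indicator_of_notMem (fun h => hw (hmem.1 h)), indicator_of_notMem hw]
    simp_rw [e3] at e2
    rw [integral_indicator measurableSet_ball.compl, integral_const_mul] at e2
    -- e2 : (4πt)^(-n/2) * ∫_{(ball 0 K)ᶜ} exp = (s^n)⁻¹ • ∫ z, indicator ...
    have hsn : (0:ℝ) < s ^ n := by positivity
    have e4 : (∫ z, (((ball (0:Rn n) r)ᶜ).indicator (fun z => heatKernel n z t)) z)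
        = s ^ n * ((4*Real.pi*t) ^ (-(n:ℝ)/2) * ∫ w in (ball (0:Rn n) K)ᶜ, Real.exp (-‖w‖ ^ 2 / 4)) := by
      rw [e2, smul_eq_mul, ← mul_assoc, mul_inv_cancel₀ hsn.ne', one_mul]
    rw [e4, ← mul_assoc]
    congr 1
    -- s^n * (4πt)^(-n/2) = (4π)^(-n/2)
    have h1 : s ^ n = t ^ ((n:ℝ)/2) := by
      rw [hs, Real.sqrt_eq_rpow, ← Real.rpow_natCast (t ^ ((1:ℝ)/2)) n, ← Real.rpow_mul ht.le]
      ring_nf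
    have h2 : (4*Real.pi*t) ^ (-(n:ℝ)/2)
        = (4*Real.pi) ^ (-(n:ℝ)/2) * t ^ (-(n:ℝ)/2) :=
      Real.mul_rpow (by positivity) ht.le
    rw [h1, h2, ← mul_assoc, mul_comm (t ^ ((n:ℝ)/2)) _, mul_assoc,
      ← Real.rpow_add ht, neg_div]
    simp
  -- final assembly
  have hA1 : (4*Real.pi*t) ^ (-(n:ℝ)/2) * (r ^ n) ≤ K ^ n := by
    have h1 : r ^ n = K ^ n * t ^ ((n:ℝ)/2) := by
      rw [hr, mul_pow]
      congr 1
      rw [hs, Real.sqrt_eq_rpow, ← Real.rpow_natCast (t ^ ((1:ℝ)/2)) n, ← Real.rpow_mul ht.le]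
      ring_nf
    have h2 : (4*Real.pi*t) ^ (-(n:ℝ)/2)
        = (4*Real.pi) ^ (-(n:ℝ)/2) * t ^ (-(n:ℝ)/2) :=
      Real.mul_rpow (by positivity) ht.le
    have h3 : (4*Real.pi) ^ (-(n:ℝ)/2) ≤ 1 := by
      apply Real.rpow_le_one_of_one_le_of_nonpos
      · nlinarith [Real.pi_gt_three]
      · rw [neg_div]
        exact neg_nonpos.2 (by positivity)
    have h5 : t ^ (-(n:ℝ)/2) * t ^ ((n:ℝ)/2) = 1 := by
      rw [← Real.rpow_add ht, neg_div]
      simp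
    have h4 : (4*Real.pi*t) ^ (-(n:ℝ)/2) * (r ^ n) = K ^ n * (4*Real.pi) ^ (-(n:ℝ)/2) := by
      rw [h1, h2]
      linear_combination (K ^ n * (4*Real.pi) ^ (-(n:ℝ)/2)) * h5
    rw [h4]
    calc K ^ n * (4*Real.pi) ^ (-(n:ℝ)/2) ≤ K ^ n * 1 :=
          mul_le_mul_of_nonneg_left h3 (by positivity)
      _ = K ^ n := mul_one _
  have hrpow : ((4*Real.pi) ^ ((n:ℝ)/2))⁻¹ = (4*Real.pi) ^ (-(n:ℝ)/2) := by
    rw [neg_div, Real.rpow_neg (by positivity)]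
  calc ‖caloricExt u₀ x t - c‖
      = ‖(∫ y in B, heatKernel n (x - y) t • (u₀ y - c))
          + ∫ y in Bᶜ, heatKernel n (x - y) t • (u₀ y - c)‖ := by rw [hkey, hsplit]
    _ ≤ ‖∫ y in B, heatKernel n (x - y) t • (u₀ y - c)‖
          + ‖∫ y in Bᶜ, heatKernel n (x - y) t • (u₀ y - c)‖ := norm_add_le _ _
    _ ≤ ((4*Real.pi*t) ^ (-(n:ℝ)/2) * ∫ y in B, ‖u₀ y - c‖)
          + (2*M) * ∫ y in Bᶜ, heatKernel n (x - y) t := add_le_add hintr hext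
    _ ≤ (4*Real.pi*t) ^ (-(n:ℝ)/2) * (r ^ n * bmoSeminorm u₀ (ENNReal.ofReal r))
          + (2*M) * ((4*Real.pi) ^ (-(n:ℝ)/2)
              * ∫ w in (ball (0:Rn n) K)ᶜ, Real.exp (-‖w‖ ^ 2 / 4)) := by
        refine add_le_add ?_ ?_
        · exact mul_le_mul_of_nonneg_left hintB (Real.rpow_nonneg (by positivity) _)
        · rw [htail]
    _ ≤ K ^ n * bmoSeminorm u₀ (ENNReal.ofReal r)
          + 2 * M * ((4 * Real.pi) ^ ((n:ℝ) / 2))⁻¹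
              * ∫ y in (ball (0 : Rn n) K)ᶜ, Real.exp (-‖y‖ ^ 2 / 4) := by
        refine add_le_add ?_ ?_
        · rw [← mul_assoc]
          exact mul_le_mul_of_nonneg_right hA1 hbmo_nonneg
        · rw [hrpow]
          exact le_of_eq (mul_assoc (2*M) _ _).symm
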